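/- (Sufficiency for SD-EF1 with two agents) Let A be an allocation of a finite set of goods S to n = 2 agents with additive nonnegative valuations. If |A_i ∩ T_i(S,r)| ≥ ⌊r/2⌋ for both agents i ∈ {1,2} and all r ∈ [|S|], then A is SD-EF1. -/
import Mathlib


open Finset
open scoped Classical

noncomputable section

/-- `A` is an allocation of the set of goods `S` among `n` agents. -/
def IsAlloc {G : Type*} (n : ℕ) (S : Finset G) (A : Fin n → Finset G) : Prop :=
  (∀ i j : Fin n, i ≠ j → Disjoint (A i) (A j)) ∧ Finset.univ.biUnion A = S

/-- The top-set `H_i(S,g) = {g' ∈ S : v g' ≥ v g}`. -/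
def topSet {G : Type*} (v : G → ℝ) (S : Finset G) (g : G) : Finset G :=
  S.filter (fun g' => v g ≤ v g')

/-- Stochastic dominance: `X ≽^SD Y` w.r.t. valuation `v` over the set of goods `S`. -/
def SDge {G : Type*} [DecidableEq G] (v : G → ℝ) (S X Y : Finset G) : Prop :=
  ∀ g ∈ S, (Y ∩ topSet v S g).card ≤ (X ∩ topSet v S g).card

/-- The allocation `A` of goods `S` is SD-EF1. -/
def SDEF1 {G : Type*} [DecidableEq G] (n : ℕ) (v : Fin n → G → ℝ) (S : Finset G)
    (A : Fin n → Finset G) : Prop :=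
  ∀ i j : Fin n, A j ≠ ∅ → ∃ g ∈ A j, SDge (v i) S (A i) ((A j).erase g)

/-- The strict preference `g ≻̂ g'` obtained from the valuation `v`, breaking ties by the
fixed (global) linear order on the goods. -/
def strictPref {G : Type*} [LinearOrder G] (v : G → ℝ) (g g' : G) : Prop :=
  v g' < v g ∨ (v g = v g' ∧ g' < g)

/-- `T` is a top-set prefix of `S` under `≻̂`: `T ⊆ S` and every good of `T` is strictly
preferred (ties broken by the global order) to every good of `S \ T`.  The set
`T_i(S, r)` is the unique such `T` of cardinality `r`. -/
def IsTopPrefix {G : Type*} [LinearOrder G] (v : G → ℝ) (S T : Finset G) : Prop :=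
  T ⊆ S ∧ ∀ g ∈ T, ∀ g' ∈ S \ T, strictPref v g g'

/-- **Sufficiency for SD-EF1, two agents.** If `|A i ∩ T_i(S,r)| ≥ ⌊r/2⌋`
for both agents `i` and all `r ∈ [|S|]`, then the allocation `A` to two agents is
SD-EF1. -/
theorem sdef1_of_topPrefix_condition_two_agents
    {G : Type*} [LinearOrder G]
    (S : Finset G) (v : Fin 2 → G → ℝ)
    (hv : ∀ i : Fin 2, ∀ g ∈ S, 0 ≤ v i g)
    (A : Fin 2 → Finset G) (hA : IsAlloc 2 S A)
    (h : ∀ i : Fin 2, ∀ r ∈ Finset.Icc 1 S.card, ∀ T : Finset G,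
      IsTopPrefix (v i) S T → T.card = r → r / 2 ≤ (A i ∩ T).card) :
    SDEF1 2 v S A := by
  rintro i j hne
  obtain ⟨hdisj, hunion⟩ := hA
  have hsub : ∀ k, A k ⊆ S := by
    intro k x hx
    rw [← hunion]
    simp only [Finset.mem_biUnion]
    exact ⟨k, mem_univ k, hx⟩
  rw [← Finset.nonempty_iff_ne_empty] at hne
  by_cases hij : i = j
  · subst hij
    obtain ⟨g, hg⟩ := hne
    refine ⟨g, hg, fun g0 _ => Finset.card_le_card ?_⟩
    intro x hx
    simp only [mem_inter, mem_erase] at hx ⊢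
    exact ⟨hx.1.2, hx.2⟩
  · obtain ⟨g, hgA, hgmax⟩ := Finset.exists_max_image (A j) (v i) hne
    refine ⟨g, hgA, fun g0 hg0 => ?_⟩
    set H := topSet (v i) S g0 with hH
    have hHsub : H ⊆ S := Finset.filter_subset _ _
    have hHtp : IsTopPrefix (v i) S H := by
      refine ⟨hHsub, fun a ha b hb => ?_⟩
      simp only [hH, topSet, mem_filter, mem_sdiff, not_and] at ha hb
      left
      have hb2 : ¬ v i g0 ≤ v i b := fun h' => hb.2 hb.1 h'
      push_neg at hb2
      linarith [ha.2]
    have hg0H : g0 ∈ H := by simp [hH, topSet, hg0]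
    have hcard : 1 ≤ H.card := Finset.card_pos.2 ⟨g0, hg0H⟩
    have ha := h i H.card (Finset.mem_Icc.2 ⟨hcard, Finset.card_le_card hHsub⟩) H hHtp rfl
    have hd : Disjoint (A i ∩ H) (A j ∩ H) :=
      (hdisj i j hij).mono inter_subset_left inter_subset_left
    have hu : (A i ∩ H) ∪ (A j ∩ H) = H := by
      rw [← Finset.union_inter_distrib_right]
      have hAS : A i ∪ A j = S := by
        rw [← hunion]
        apply Finset.Subset.antisymm
        · intro x hx
          simp only [Finset.mem_biUnion]
          rcases Finset.mem_union.1 hx with h' | h'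
          exacts [⟨i, mem_univ i, h'⟩, ⟨j, mem_univ j, h'⟩]
        · intro x hx
          simp only [mem_biUnion, mem_univ, true_and] at hx
          obtain ⟨k, hk⟩ := hx
          simp only [mem_union]
          fin_cases i <;> fin_cases j <;> fin_cases k <;> simp_all
      rw [hAS, Finset.inter_eq_right.2 hHsub]
    have hsum : (A i ∩ H).card + (A j ∩ H).card = H.card := by
      rw [← Finset.card_union_of_disjoint hd, hu]
    by_cases hb : (A j ∩ H).Nonempty
    · obtain ⟨g', hg'⟩ := hb
      simp only [mem_inter] at hg'
      have hgH : g ∈ H := by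
        simp only [hH, topSet, mem_filter] at hg' ⊢
        exact ⟨hsub j hgA, le_trans hg'.2.2 (hgmax g' hg'.1)⟩
      have herase : (A j).erase g ∩ H = (A j ∩ H).erase g := by
        ext x
        simp only [mem_inter, mem_erase]
        tauto
      rw [herase, Finset.card_erase_of_mem (mem_inter.2 ⟨hgA, hgH⟩)]
      omega
    · rw [Finset.not_nonempty_iff_eq_empty] at hb
      have : (A j).erase g ∩ H ⊆ A j ∩ H :=
        Finset.inter_subset_inter (Finset.erase_subset _ _) le_rfl
      rw [hb] at this
      simp [Finset.subset_empty.1 this]
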